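/- If u = (u_n)_{n≥−1} is an extended vector generalized eigenvector for λ ∈ ℝ, then for every t ≥ 1: (1/2)(‖u_{−1}‖² + ‖u_0‖²) ⌊R(λ)⌋²_{[1,t]} ≤ ‖u‖²_{[0,t]} ≤ (‖u_{−1}‖² + ‖u_0‖²) ‖R(λ)‖²_{[1,t]}, where R_n(λ) = T_{n-1}(λ)···T_0(λ) are the n-step transfer matrices, ‖R(λ)‖²_{[1,t]} = ∑_{k=1}^{⌊t⌋}‖R_k(λ)‖² + {t}‖R_{⌊t⌋+1}(λ)‖², and ⌊R(λ)⌋²_{[1,t]} is defined analogously using the minimum modulus ⌊A⌋ = inf_{‖x‖=1}‖Ax‖. -/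

import Mathlib

open Matrix

/-- Operator norm of a complex square matrix (acting on Euclidean space). -/
noncomputable def opNorm {n : Type*} [Fintype n] [DecidableEq n] (X : Matrix n n ℂ) : ℝ :=
  ‖Matrix.toEuclideanCLM (𝕜 := ℂ) (n := n) X‖

/-- Minimum modulus `⌊X⌋ = inf_{‖v‖=1} ‖Xv‖`. -/
noncomputable def minMod {n : Type*} [Fintype n] [DecidableEq n] (X : Matrix n n ℂ) : ℝ :=
  ⨅ v : {v : EuclideanSpace ℂ n // ‖v‖ = 1}, ‖Matrix.toEuclideanCLM (𝕜 := ℂ) X v.1‖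

/-- Euclidean norm of a vector in `ℂ^d`. -/
noncomputable def vnorm {d : ℕ} (v : Fin d → ℂ) : ℝ :=
  Real.sqrt (∑ i, ‖v i‖ ^ 2)

/-- One-step transfer matrix `T_n(λ)`. -/
noncomputable def transferT {d : ℕ} (A B : ℤ → Matrix (Fin d) (Fin d) ℂ) (lam : ℝ)
    (n : ℕ) : Matrix (Fin d ⊕ Fin d) (Fin d ⊕ Fin d) ℂ :=
  Matrix.fromBlocks 0 1 (-((A (n : ℤ))⁻¹ * (A ((n : ℤ) - 1))ᴴ))
    ((A (n : ℤ))⁻¹ * ((lam : ℂ) • 1 - B (n : ℤ)))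

/-- `n`-step transfer matrix `R_n(λ) = T_{n-1}(λ)···T_0(λ)`, `R_0(λ) = I`. -/
noncomputable def transferR {d : ℕ} (A B : ℤ → Matrix (Fin d) (Fin d) ℂ) (lam : ℝ) :
    ℕ → Matrix (Fin d ⊕ Fin d) (Fin d ⊕ Fin d) ℂ
  | 0 => 1
  | n + 1 => transferT A B lam n * transferR A B lam n

/-- If `u` is an extended generalized eigenvector for `λ`, then for every `t ≥ 1`,
`(1/2)(‖u_{−1}‖²+‖u_0‖²)⌊R(λ)⌋²_{[1,t]} ≤ ‖u‖²_{[0,t]} ≤ (‖u_{−1}‖²+‖u_0‖²)‖R(λ)‖²_{[1,t]}`. -/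
lemma minMod_nonneg {n : Type*} [Fintype n] [DecidableEq n] (X : Matrix n n ℂ) :
    0 ≤ minMod X :=
  Real.iInf_nonneg fun _ => norm_nonneg _

lemma minMod_mul_norm_le {n : Type*} [Fintype n] [DecidableEq n] (X : Matrix n n ℂ)
    (v : EuclideanSpace ℂ n) :
    minMod X * ‖v‖ ≤ ‖Matrix.toEuclideanCLM (𝕜 := ℂ) X v‖ := by
  rcases eq_or_ne v 0 with rfl | hv
  · simp
  · have hnv : (0:ℝ) < ‖v‖ := norm_pos_iff.mpr hv
    set w : EuclideanSpace ℂ n := ((‖v‖ : ℂ))⁻¹ • v with hwdef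
    have hw : ‖w‖ = 1 := by
      rw [hwdef, norm_smul, norm_inv]
      simp [Complex.norm_real, abs_of_pos hnv, inv_mul_cancel₀ hnv.ne']
    have h1 : minMod X ≤ ‖Matrix.toEuclideanCLM (𝕜 := ℂ) X w‖ := by
      refine ciInf_le ⟨0, ?_⟩ (⟨w, hw⟩ : {v : EuclideanSpace ℂ n // ‖v‖ = 1})
      rintro x ⟨i, rfl⟩; exact norm_nonneg _
    have h2 : ‖Matrix.toEuclideanCLM (𝕜 := ℂ) X w‖ = ‖v‖⁻¹ * ‖Matrix.toEuclideanCLM (𝕜 := ℂ) X v‖ := by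
      rw [hwdef, _root_.map_smul, norm_smul, norm_inv]
      simp [Complex.norm_real, abs_of_pos hnv]
    rw [h2] at h1
    calc minMod X * ‖v‖ ≤ (‖v‖⁻¹ * ‖Matrix.toEuclideanCLM (𝕜 := ℂ) X v‖) * ‖v‖ :=
          mul_le_mul_of_nonneg_right h1 hnv.le
      _ = ‖Matrix.toEuclideanCLM (𝕜 := ℂ) X v‖ := by field_simp

lemma vnorm_sq {d : ℕ} (v : Fin d → ℂ) : vnorm v ^ 2 = ∑ i, ‖v i‖ ^ 2 := by
  rw [vnorm, Real.sq_sqrt]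
  positivity

theorem egev_transfer_bounds {d : ℕ} (A B : ℤ → Matrix (Fin d) (Fin d) ℂ)
    (hA : ∀ n : ℤ, 0 ≤ n → IsUnit (A n)) (hAm : A (-1) = -1)
    (hB : ∀ n : ℤ, 0 ≤ n → (B n).IsHermitian)
    (lam : ℝ) (u : ℤ → Fin d → ℂ)
    (hu : ∀ n : ℤ, 0 ≤ n →
      (A (n - 1))ᴴ.mulVec (u (n - 1)) + (B n).mulVec (u n) + (A n).mulVec (u (n + 1)) =
        (lam : ℂ) • u n)
    (t : ℝ) (ht : 1 ≤ t) :
    (1 / 2) * (vnorm (u (-1)) ^ 2 + vnorm (u 0) ^ 2) *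
        (∑ k ∈ Finset.Icc 1 ⌊t⌋₊, minMod (transferR A B lam k) ^ 2 +
          Int.fract t * minMod (transferR A B lam (⌊t⌋₊ + 1)) ^ 2) ≤
      (∑ k ∈ Finset.range (⌊t⌋₊ + 1), vnorm (u (k : ℤ)) ^ 2 +
        Int.fract t * vnorm (u ((⌊t⌋₊ : ℤ) + 1)) ^ 2) ∧
    (∑ k ∈ Finset.range (⌊t⌋₊ + 1), vnorm (u (k : ℤ)) ^ 2 +
        Int.fract t * vnorm (u ((⌊t⌋₊ : ℤ) + 1)) ^ 2) ≤
      (vnorm (u (-1)) ^ 2 + vnorm (u 0) ^ 2) *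
        (∑ k ∈ Finset.Icc 1 ⌊t⌋₊, opNorm (transferR A B lam k) ^ 2 +
          Int.fract t * opNorm (transferR A B lam (⌊t⌋₊ + 1)) ^ 2) := by
  -- basic notation
  set N := ⌊t⌋₊ with hNdef
  have hN1 : 1 ≤ N := Nat.le_floor (by exact_mod_cast ht)
  have hf0 : 0 ≤ Int.fract t := Int.fract_nonneg t
  have hf1 : Int.fract t ≤ 1 := (Int.fract_lt_one t).le
  -- the vector sequence
  set w : ℕ → (Fin d ⊕ Fin d → ℂ) := fun n => Sum.elim (u ((n:ℤ) - 1)) (u (n:ℤ)) with hwdef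
  have hstep : ∀ n : ℕ, (transferT A B lam n).mulVec (w n) = w (n+1) := by
    intro n
    have h0 : (0:ℤ) ≤ (n:ℤ) := Int.natCast_nonneg n
    have hdet : IsUnit (A (n:ℤ)).det := (Matrix.isUnit_iff_isUnit_det _).mp (hA _ h0)
    have hinv : (A (n:ℤ))⁻¹ * A (n:ℤ) = 1 := Matrix.nonsing_inv_mul _ hdet
    have hrec := hu (n:ℤ) h0
    have hAn : (A (n:ℤ)).mulVec (u ((n:ℤ)+1)) =
        ((lam : ℂ) • 1 - B (n:ℤ)).mulVec (u (n:ℤ)) - (A ((n:ℤ)-1))ᴴ.mulVec (u ((n:ℤ)-1)) := by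
      rw [Matrix.sub_mulVec, Matrix.smul_mulVec, Matrix.one_mulVec]
      rw [← hrec]; abel
    rw [transferT, Matrix.fromBlocks_mulVec]
    have hl : w n ∘ Sum.inl = u ((n:ℤ)-1) := rfl
    have hr : w n ∘ Sum.inr = u (n:ℤ) := rfl
    rw [hl, hr]
    have htop : (0 : Matrix (Fin d) (Fin d) ℂ).mulVec (u ((n:ℤ)-1)) +
        (1 : Matrix (Fin d) (Fin d) ℂ).mulVec (u (n:ℤ)) = u (n:ℤ) := by
      rw [Matrix.zero_mulVec, Matrix.one_mulVec, zero_add]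
    have hbot : (-((A (n:ℤ))⁻¹ * (A ((n:ℤ)-1))ᴴ)).mulVec (u ((n:ℤ)-1)) +
        ((A (n:ℤ))⁻¹ * ((lam : ℂ) • 1 - B (n:ℤ))).mulVec (u (n:ℤ)) = u ((n:ℤ)+1) := by
      rw [Matrix.neg_mulVec, ← Matrix.mulVec_mulVec, ← Matrix.mulVec_mulVec,
        ← Matrix.mulVec_neg, ← Matrix.mulVec_add, ← sub_eq_neg_add, ← hAn,
        Matrix.mulVec_mulVec, hinv, Matrix.one_mulVec]
    rw [htop, hbot]
    have : ((n+1 : ℕ) : ℤ) - 1 = (n : ℤ) := by push_cast; ring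
    ext i
    rcases i with i | i <;> simp [hwdef, this]
  have hR : ∀ n : ℕ, (transferR A B lam n).mulVec (w 0) = w n := by
    intro n
    induction n with
    | zero => rw [transferR, Matrix.one_mulVec]
    | succ m ih => rw [transferR, ← Matrix.mulVec_mulVec, ih, hstep]
  -- Euclidean versions
  set wE : ℕ → EuclideanSpace ℂ (Fin d ⊕ Fin d) :=
    fun n => (WithLp.equiv 2 (Fin d ⊕ Fin d → ℂ)).symm (w n) with hwEdef
  have hRE : ∀ n : ℕ,
      Matrix.toEuclideanCLM (𝕜 := ℂ) (transferR A B lam n) (wE 0) = wE n := by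
    intro n
    rw [hwEdef]
    simp only [WithLp.equiv_symm_apply, Matrix.toEuclideanCLM_toLp]
    congr 1
    rw [hR]
  set g : ℕ → ℝ := fun k => vnorm (u (k:ℤ)) ^ 2 with hgdef
  have hwn : ∀ n : ℕ, ‖wE n‖ ^ 2 = vnorm (u ((n:ℤ)-1)) ^ 2 + g n := by
    intro n
    rw [EuclideanSpace.norm_eq, Real.sq_sqrt (by positivity)]
    rw [hgdef]
    simp only [hwEdef, WithLp.equiv_symm_apply, PiLp.toLp_apply]
    rw [Fintype.sum_sum_type, vnorm_sq, vnorm_sq]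
    rfl
  set c := vnorm (u (-1)) ^ 2 + vnorm (u 0) ^ 2 with hcdef
  have hc0 : 0 ≤ c := by rw [hcdef]; positivity
  have hc : ‖wE 0‖ ^ 2 = c := by
    have h := hwn 0
    norm_num at h
    rw [h, hgdef, hcdef]
    norm_num
  -- key squared bounds
  have key : ∀ n : ℕ, minMod (transferR A B lam n) ^ 2 * c ≤ ‖wE n‖ ^ 2 ∧
      ‖wE n‖ ^ 2 ≤ opNorm (transferR A B lam n) ^ 2 * c := by
    intro n
    constructor
    · have h := minMod_mul_norm_le (transferR A B lam n) (wE 0)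
      rw [hRE n] at h
      have h2 : (minMod (transferR A B lam n) * ‖wE 0‖) ^ 2 ≤ ‖wE n‖ ^ 2 := by
        apply pow_le_pow_left₀ (mul_nonneg (minMod_nonneg _) (norm_nonneg _)) h
      rw [mul_pow, hc] at h2
      exact h2
    · have h := (Matrix.toEuclideanCLM (𝕜 := ℂ) (transferR A B lam n)).le_opNorm (wE 0)
      rw [hRE n] at h
      have h2 : ‖wE n‖ ^ 2 ≤ (opNorm (transferR A B lam n) * ‖wE 0‖) ^ 2 :=
        pow_le_pow_left₀ (norm_nonneg _) h 2
      rw [mul_pow, hc] at h2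
      exact h2
  have keyS : ∀ k : ℕ, minMod (transferR A B lam (k+1)) ^ 2 * c ≤ g k + g (k+1) ∧
      g k + g (k+1) ≤ opNorm (transferR A B lam (k+1)) ^ 2 * c := by
    intro k
    have hcast : ((k+1 : ℕ) : ℤ) - 1 = (k : ℤ) := by push_cast; ring
    have := hwn (k+1)
    rw [hcast] at this
    have hk : ‖wE (k+1)‖ ^ 2 = g k + g (k+1) := this
    rw [← hk]
    exact key (k+1)
  -- sum manipulations
  have hIcc : ∀ f : ℕ → ℝ, ∑ k ∈ Finset.Icc 1 N, f k = ∑ j ∈ Finset.range N, f (j+1) := by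
    intro f
    rw [← Finset.Ico_add_one_right_eq_Icc, Finset.sum_Ico_eq_sum_range]
    simp [add_comm]
  set S := ∑ k ∈ Finset.range (N + 1), g k with hSdef
  have hgnn : ∀ k, 0 ≤ g k := by intro k; rw [hgdef]; positivity
  have hP1 : ∑ j ∈ Finset.range N, (g j + g (j+1)) = 2 * S - g 0 - g N := by
    rw [Finset.sum_add_distrib]
    have e1 : ∑ j ∈ Finset.range N, g (j+1) = S - g 0 := by
      have := Finset.sum_range_succ' g N
      rw [← hSdef] at this
      linarith [this]
    have e2 : ∑ j ∈ Finset.range N, g j = S - g N := by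
      have := Finset.sum_range_succ g N
      rw [← hSdef] at this
      linarith [this]
    rw [e1, e2]; ring
  have hg0N : g 0 + g N ≤ S := by
    have h0 : g 0 ≤ ∑ j ∈ Finset.range N, g j :=
      Finset.single_le_sum (fun k _ => hgnn k) (Finset.mem_range.mpr hN1)
    have := Finset.sum_range_succ g N
    rw [← hSdef] at this
    linarith
  have hPle : ∑ j ∈ Finset.range N, (g j + g (j+1)) ≤
      ∑ j ∈ Finset.range N, opNorm (transferR A B lam (j+1)) ^ 2 * c :=
    Finset.sum_le_sum fun j _ => (keyS j).2
  have hPge : ∑ j ∈ Finset.range N, minMod (transferR A B lam (j+1)) ^ 2 * c ≤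
      ∑ j ∈ Finset.range N, (g j + g (j+1)) :=
    Finset.sum_le_sum fun j _ => (keyS j).1
  have hsumM : ∑ k ∈ Finset.Icc 1 N, opNorm (transferR A B lam k) ^ 2 * c =
      ∑ j ∈ Finset.range N, opNorm (transferR A B lam (j+1)) ^ 2 * c := by
    exact hIcc _
  have hsumm : ∑ k ∈ Finset.Icc 1 N, minMod (transferR A B lam k) ^ 2 * c =
      ∑ j ∈ Finset.range N, minMod (transferR A B lam (j+1)) ^ 2 * c := by
    exact hIcc _
  have hdistM : ∑ k ∈ Finset.Icc 1 N, opNorm (transferR A B lam k) ^ 2 * c =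
      (∑ k ∈ Finset.Icc 1 N, opNorm (transferR A B lam k) ^ 2) * c := by
    rw [Finset.sum_mul]
  have hdistm : ∑ k ∈ Finset.Icc 1 N, minMod (transferR A B lam k) ^ 2 * c =
      (∑ k ∈ Finset.Icc 1 N, minMod (transferR A B lam k) ^ 2) * c := by
    rw [Finset.sum_mul]
  have hlast := keyS N
  -- final assembly
  constructor
  · -- lower bound
    have h1 : (∑ k ∈ Finset.Icc 1 N, minMod (transferR A B lam k) ^ 2) * c ≤
        2 * S - g 0 - g N := by
      rw [← hdistm, hsumm]; linarith [hPge, hP1]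
    have h2 : Int.fract t * (minMod (transferR A B lam (N+1)) ^ 2 * c) ≤
        Int.fract t * (g N + g (N+1)) :=
      mul_le_mul_of_nonneg_left hlast.1 hf0
    have h3 : Int.fract t * (g N + g (N+1)) ≤ g N + Int.fract t * g (N+1) := by
      have := hgnn N
      nlinarith [hgnn (N+1)]
    have hNN1 : ((N:ℤ) + 1) = ((N+1 : ℕ) : ℤ) := by push_cast; ring
    have hgN1 : vnorm (u ((N:ℤ)+1)) ^ 2 = g (N+1) := by rw [hNN1]
    rw [hgN1]
    have hexp : (1 / 2) * c * ((∑ k ∈ Finset.Icc 1 N, minMod (transferR A B lam k) ^ 2) +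
        Int.fract t * minMod (transferR A B lam (N+1)) ^ 2) =
        (1/2) * ((∑ k ∈ Finset.Icc 1 N, minMod (transferR A B lam k) ^ 2) * c) +
        (1/2) * (Int.fract t * (minMod (transferR A B lam (N+1)) ^ 2 * c)) := by ring
    rw [hexp]
    have htriv : (0:ℝ) ≤ 1 := by linarith
    have hx1 : 1 / 2 * ((∑ k ∈ Finset.Icc 1 N, minMod (transferR A B lam k) ^ 2) * c) ≤
        1/2 * (2 * S - g 0 - g N) :=
      mul_le_mul_of_nonneg_left h1 (by norm_num)
    have hx2 : 1 / 2 * (Int.fract t * (minMod (transferR A B lam (N+1)) ^ 2 * c)) ≤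
        1/2 * (g N + Int.fract t * g (N+1)) :=
      mul_le_mul_of_nonneg_left (h2.trans h3) (by norm_num)
    have hx3 : 0 ≤ g 0 := hgnn 0
    have hx4 : 0 ≤ Int.fract t * g (N+1) := mul_nonneg hf0 (hgnn (N+1))
    linarith [hx1, hx2, hx3, hx4]
  · -- upper bound
    have h1 : S ≤ (∑ k ∈ Finset.Icc 1 N, opNorm (transferR A B lam k) ^ 2) * c := by
      rw [← hdistM, hsumM]; linarith [hPle, hP1, hg0N]
    have h2 : Int.fract t * g (N+1) ≤ Int.fract t * (opNorm (transferR A B lam (N+1)) ^ 2 * c) := by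
      apply mul_le_mul_of_nonneg_left _ hf0
      linarith [hlast.2, hgnn N]
    have hNN1 : ((N:ℤ) + 1) = ((N+1 : ℕ) : ℤ) := by push_cast; ring
    have hgN1 : vnorm (u ((N:ℤ)+1)) ^ 2 = g (N+1) := by rw [hNN1]
    rw [hgN1]
    have hexp : c * ((∑ k ∈ Finset.Icc 1 N, opNorm (transferR A B lam k) ^ 2) +
        Int.fract t * opNorm (transferR A B lam (N+1)) ^ 2) =
        (∑ k ∈ Finset.Icc 1 N, opNorm (transferR A B lam k) ^ 2) * c +
        Int.fract t * (opNorm (transferR A B lam (N+1)) ^ 2 * c) := by ring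
    rw [hexp]
    linarith [h1, h2]
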